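/- For every m > 0, all b₁, b₂ ∈ ℝ and every r ∈ ℂ one has 2·|r|² ≤ |(b₁ − i·m)·(b₂ − i/m) − |r|²|². Equivalently, the cross-section σ := 4|r|²/|(b₁ − i m)(b₂ − i/m) − |r|²|² satisfies σ ≤ 2. -/

import Mathlib

/-- the bound `σ(λ) ≤ 2` on the cross-section, Section 4.2.
For every `m > 0`, all `b₁, b₂ ∈ ℝ` and every `r ∈ ℂ` one has
`2|r|² ≤ |(b₁ - i m)(b₂ - i/m) - |r|²|²`; equivalently the cross-section
`σ = 4|r|²/|(b₁ - i m)(b₂ - i/m) - |r|²|²` satisfies `σ ≤ 2`. -/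
theorem crossSection_le_two
    (m : ℝ) (hm : 0 < m) (b₁ b₂ : ℝ) (r : ℂ) :
    2 * ‖r‖ ^ 2 ≤
        ‖(((b₁ : ℂ) - Complex.I * (m : ℂ)) * ((b₂ : ℂ) - Complex.I / (m : ℂ)) -
          ((‖r‖ : ℝ) : ℂ) ^ 2)‖ ^ 2 ∧
      4 * ‖r‖ ^ 2 /
          ‖(((b₁ : ℂ) - Complex.I * (m : ℂ)) * ((b₂ : ℂ) - Complex.I / (m : ℂ)) -
            ((‖r‖ : ℝ) : ℂ) ^ 2)‖ ^ 2 ≤ 2 := by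
  set ρ : ℝ := ‖r‖ with hρdef
  have hρ : 0 ≤ ρ := norm_nonneg r
  have hm' : (m : ℂ) ≠ 0 := by exact_mod_cast hm.ne'
  have hz : ((b₁ : ℂ) - Complex.I * (m : ℂ)) * ((b₂ : ℂ) - Complex.I / (m : ℂ)) -
      ((ρ : ℝ) : ℂ) ^ 2 =
      ((b₁ * b₂ - 1 - ρ ^ 2 : ℝ) : ℂ) + ((-(b₁ / m + b₂ * m) : ℝ) : ℂ) * Complex.I := by
    push_cast
    field_simp
    ring_nf
    simp [Complex.I_sq]
    ring
  rw [hz]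
  have habs : ‖(((b₁ * b₂ - 1 - ρ ^ 2 : ℝ) : ℂ) +
      ((-(b₁ / m + b₂ * m) : ℝ) : ℂ) * Complex.I)‖ ^ 2 =
      (b₁ * b₂ - 1 - ρ ^ 2) ^ 2 + (-(b₁ / m + b₂ * m)) ^ 2 := by
    rw [Complex.sq_norm, Complex.normSq_add_mul_I]
  rw [habs]
  have hprod : (b₁ / m) * (b₂ * m) = b₁ * b₂ := by field_simp
  have key : 2 * ρ ^ 2 ≤ (b₁ * b₂ - 1 - ρ ^ 2) ^ 2 + (-(b₁ / m + b₂ * m)) ^ 2 := by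
    nlinarith [sq_nonneg (b₁ / m - b₂ * m), sq_nonneg (b₁ * b₂ - ρ ^ 2 + 1), sq_nonneg ρ]
  refine ⟨key, ?_⟩
  set D := (b₁ * b₂ - 1 - ρ ^ 2) ^ 2 + (-(b₁ / m + b₂ * m)) ^ 2 with hD
  rcases eq_or_lt_of_le (by positivity : (0:ℝ) ≤ D) with h0 | h0
  · have : ρ ^ 2 = 0 := by nlinarith
    simp [this, ← h0]
  · rw [div_le_iff₀ h0]
    nlinarith
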